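/- Let T be a finite set of n points in ℝ^d, let α ∈ (0,1], and let S_1,…,S_k ⊆ T be pairwise disjoint subsets satisfying the no-large-sub-cluster condition with parameter α: for every i and every subset S' ⊆ S_i with |S'| ≥ 0.8·α·n, it holds that σ_{S'} ≥ 0.1·σ_{S_i}. Suppose B_1,…,B_m ⊆ T are pairwise disjoint sets with |B_j| ≥ 0.92·α·n for all j, that for each j ∈ [m] there is an index i(j) ∈ [k] with |B_j ∩ S_{i(j)}| ≥ 0.96·|B_j|, and that ‖μ_{B_j} − μ_{B_{j'}}‖₂ > 13·(σ_{B_j} + σ_{B_{j'}})/√α for all j ≠ j'. Then the map j ↦ i(j) is injective; i.e., at most one of the sets B_1,…,B_m corresponds to each cluster S_i. -/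

import Mathlib

open scoped RealInnerProductSpace


open scoped BigOperators

noncomputable instance euclDecEq (d : ℕ) : DecidableEq (EuclideanSpace ℝ (Fin d)) :=
  Classical.decEq _

/-- The operator (spectral) norm of a `d × d` real matrix, viewed as a linear map on
Euclidean space. -/
noncomputable def opNorm {d : ℕ} (M : Matrix (Fin d) (Fin d) ℝ) : ℝ :=
  ‖LinearMap.toContinuousLinearMap (Matrix.toEuclideanLin M)‖

/-- The outer product `u uᵀ` as a matrix. -/
noncomputable def outerMat {d : ℕ} (u : EuclideanSpace ℝ (Fin d)) : Matrix (Fin d) (Fin d) ℝ :=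
  Matrix.of fun a b => u a * u b

/-- The mean of a finite set of points in `ℝ^d`. -/
noncomputable def fmean {d : ℕ} (S : Finset (EuclideanSpace ℝ (Fin d))) :
    EuclideanSpace ℝ (Fin d) :=
  (S.card : ℝ)⁻¹ • ∑ x ∈ S, x

/-- The covariance matrix of a finite set of points in `ℝ^d`. -/
noncomputable def fcov {d : ℕ} (S : Finset (EuclideanSpace ℝ (Fin d))) :
    Matrix (Fin d) (Fin d) ℝ :=
  (S.card : ℝ)⁻¹ • ∑ x ∈ S, outerMat (x - fmean S)

/-- `σ_S`, the square root of the largest eigenvalue of the covariance matrix of `S`. -/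
noncomputable def fstdev {d : ℕ} (S : Finset (EuclideanSpace ℝ (Fin d))) : ℝ :=
  Real.sqrt (opNorm (fcov S))


lemma outer_apply {d : ℕ} (u v : EuclideanSpace ℝ (Fin d)) :
    Matrix.toEuclideanLin (outerMat u) v = (⟪u, v⟫) • u := by
  ext a
  simp [Matrix.toEuclideanLin_apply, outerMat, Matrix.mulVec, dotProduct,
    PiLp.inner_apply, Finset.mul_sum, mul_comm, mul_assoc, mul_left_comm]

lemma inner_fcov {d : ℕ} (S : Finset (EuclideanSpace ℝ (Fin d)))
    (v w : EuclideanSpace ℝ (Fin d)) :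
    ⟪Matrix.toEuclideanLin (fcov S) v, w⟫ =
      (S.card : ℝ)⁻¹ * ∑ x ∈ S, ⟪x - fmean S, v⟫ * ⟪x - fmean S, w⟫ := by
  simp only [fcov, map_smul, map_sum, LinearMap.smul_apply, LinearMap.sum_apply,
    real_inner_smul_left, sum_inner, outer_apply]

lemma fstdev_nonneg {d : ℕ} (S : Finset (EuclideanSpace ℝ (Fin d))) : 0 ≤ fstdev S :=
  Real.sqrt_nonneg _

lemma fstdev_sq {d : ℕ} (S : Finset (EuclideanSpace ℝ (Fin d))) :
    fstdev S ^ 2 = opNorm (fcov S) := Real.sq_sqrt (norm_nonneg _)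

lemma qform_le {d : ℕ} (S : Finset (EuclideanSpace ℝ (Fin d))) (v : EuclideanSpace ℝ (Fin d)) :
    (S.card : ℝ)⁻¹ * ∑ x ∈ S, ⟪x - fmean S, v⟫ ^ 2 ≤ fstdev S ^ 2 * ‖v‖ ^ 2 := by
  have h1 : (S.card : ℝ)⁻¹ * ∑ x ∈ S, ⟪x - fmean S, v⟫ ^ 2 =
      ⟪Matrix.toEuclideanLin (fcov S) v, v⟫ := by
    rw [inner_fcov]; congr 1; exact Finset.sum_congr rfl fun x _ => sq _
  rw [h1, fstdev_sq]
  calc ⟪Matrix.toEuclideanLin (fcov S) v, v⟫ ≤ ‖Matrix.toEuclideanLin (fcov S) v‖ * ‖v‖ :=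
        real_inner_le_norm _ _
    _ ≤ opNorm (fcov S) * ‖v‖ * ‖v‖ := by
        apply mul_le_mul_of_nonneg_right _ (norm_nonneg v)
        exact (LinearMap.toContinuousLinearMap (Matrix.toEuclideanLin (fcov S))).le_opNorm v
    _ = opNorm (fcov S) * ‖v‖ ^ 2 := by ring

lemma sq_le_sq_imp_le {x y : ℝ} (hy : 0 ≤ y) (h : x ^ 2 ≤ y ^ 2) (hx : 0 ≤ x) : x ≤ y := by
  nlinarith

lemma fstdev_sq_le {d : ℕ} (S : Finset (EuclideanSpace ℝ (Fin d))) (C : ℝ) (hC : 0 ≤ C)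
    (h : ∀ v : EuclideanSpace ℝ (Fin d),
      (S.card : ℝ)⁻¹ * ∑ x ∈ S, ⟪x - fmean S, v⟫ ^ 2 ≤ C * ‖v‖ ^ 2) :
    fstdev S ^ 2 ≤ C := by
  rw [fstdev_sq]
  refine ContinuousLinearMap.opNorm_le_bound _ hC fun v => ?_
  set T := LinearMap.toContinuousLinearMap (Matrix.toEuclideanLin (fcov S))
  have hTv : T v = Matrix.toEuclideanLin (fcov S) v := rfl
  set w : EuclideanSpace ℝ (Fin d) := Matrix.toEuclideanLin (fcov S) v with hw
  rw [hTv]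
  set c : ℝ := (S.card : ℝ)⁻¹ with hc
  have hc0 : 0 ≤ c := by positivity
  have hBvw : ‖w‖ ^ 2 = c * ∑ x ∈ S, ⟪x - fmean S, v⟫ * ⟪x - fmean S, w⟫ := by
    rw [← inner_fcov, ← hw, real_inner_self_eq_norm_sq]
  have hcs : (∑ x ∈ S, ⟪x - fmean S, v⟫ * ⟪x - fmean S, w⟫) ^ 2 ≤
      (∑ x ∈ S, ⟪x - fmean S, v⟫ ^ 2) * (∑ x ∈ S, ⟪x - fmean S, w⟫ ^ 2) :=
    Finset.sum_mul_sq_le_sq_mul_sq _ _ _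
  have hv : c * ∑ x ∈ S, ⟪x - fmean S, v⟫ ^ 2 ≤ C * ‖v‖ ^ 2 := h v
  have hwq : c * ∑ x ∈ S, ⟪x - fmean S, w⟫ ^ 2 ≤ C * ‖w‖ ^ 2 := h w
  have hv0 : 0 ≤ c * ∑ x ∈ S, ⟪x - fmean S, v⟫ ^ 2 := by positivity
  have hw0 : 0 ≤ c * ∑ x ∈ S, ⟪x - fmean S, w⟫ ^ 2 := by positivity
  have key : (‖w‖ ^ 2) ^ 2 ≤ (C * ‖v‖ ^ 2) * (C * ‖w‖ ^ 2) := by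
    calc (‖w‖ ^ 2) ^ 2 = (c * ∑ x ∈ S, ⟪x - fmean S, v⟫ * ⟪x - fmean S, w⟫) ^ 2 := by
          rw [hBvw]
      _ = c ^ 2 * (∑ x ∈ S, ⟪x - fmean S, v⟫ * ⟪x - fmean S, w⟫) ^ 2 := by ring
      _ ≤ c ^ 2 * ((∑ x ∈ S, ⟪x - fmean S, v⟫ ^ 2) * (∑ x ∈ S, ⟪x - fmean S, w⟫ ^ 2)) := by
          apply mul_le_mul_of_nonneg_left hcs (by positivity)
      _ = (c * ∑ x ∈ S, ⟪x - fmean S, v⟫ ^ 2) * (c * ∑ x ∈ S, ⟪x - fmean S, w⟫ ^ 2) := by ring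
      _ ≤ (C * ‖v‖ ^ 2) * (C * ‖w‖ ^ 2) := mul_le_mul hv hwq hw0 (by positivity)
  rcases eq_or_lt_of_le (norm_nonneg w) with h0 | h0
  · rw [← h0]; positivity
  · have : ‖w‖ ^ 2 ≤ (C * ‖v‖) ^ 2 := by
      have h2 : (0:ℝ) < ‖w‖ ^ 2 := by positivity
      nlinarith
    exact sq_le_sq_imp_le (by positivity) this (norm_nonneg w)

lemma sum_inner_sub_fmean {d : ℕ} (A : Finset (EuclideanSpace ℝ (Fin d)))
    (v : EuclideanSpace ℝ (Fin d)) : ∑ x ∈ A, ⟪x - fmean A, v⟫ = 0 := by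
  have hm : ⟪fmean A, v⟫ = (A.card : ℝ)⁻¹ * ∑ x ∈ A, ⟪x, v⟫ := by
    rw [fmean, real_inner_smul_left, sum_inner]
  simp only [inner_sub_left, Finset.sum_sub_distrib, Finset.sum_const, nsmul_eq_mul, hm]
  rcases eq_or_ne A.card 0 with h | h
  · simp [Finset.card_eq_zero.mp h]
  · field_simp
    ring

lemma sum_sq_split {d : ℕ} (A : Finset (EuclideanSpace ℝ (Fin d)))
    (z v : EuclideanSpace ℝ (Fin d)) :
    ∑ x ∈ A, ⟪x - z, v⟫ ^ 2 =
      (∑ x ∈ A, ⟪x - fmean A, v⟫ ^ 2) + (A.card : ℝ) * ⟪fmean A - z, v⟫ ^ 2 := by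
  have key : ∀ x : EuclideanSpace ℝ (Fin d), ⟪x - z, v⟫ ^ 2 =
      ⟪x - fmean A, v⟫ ^ 2 + 2 * ⟪fmean A - z, v⟫ * ⟪x - fmean A, v⟫ +
        ⟪fmean A - z, v⟫ ^ 2 := by
    intro x
    have : x - z = (x - fmean A) + (fmean A - z) := by abel
    rw [this, inner_add_left]
    ring
  calc ∑ x ∈ A, ⟪x - z, v⟫ ^ 2
      = ∑ x ∈ A, (⟪x - fmean A, v⟫ ^ 2 + 2 * ⟪fmean A - z, v⟫ * ⟪x - fmean A, v⟫ +
          ⟪fmean A - z, v⟫ ^ 2) := Finset.sum_congr rfl fun x _ => key x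
    _ = (∑ x ∈ A, ⟪x - fmean A, v⟫ ^ 2) +
          2 * ⟪fmean A - z, v⟫ * (∑ x ∈ A, ⟪x - fmean A, v⟫) +
          (A.card : ℝ) * ⟪fmean A - z, v⟫ ^ 2 := by
        rw [Finset.sum_add_distrib, Finset.sum_add_distrib, ← Finset.mul_sum]
        simp [Finset.sum_const, nsmul_eq_mul]
    _ = _ := by rw [sum_inner_sub_fmean]; ring

lemma sum_sq_le {d : ℕ} (S : Finset (EuclideanSpace ℝ (Fin d))) (v : EuclideanSpace ℝ (Fin d)) :
    ∑ x ∈ S, ⟪x - fmean S, v⟫ ^ 2 ≤ (S.card : ℝ) * (fstdev S ^ 2 * ‖v‖ ^ 2) := by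
  rcases eq_or_ne S.card 0 with h | h
  · simp [Finset.card_eq_zero.mp h]
  · have hc : (0:ℝ) < (S.card : ℝ) := by positivity
    have := qform_le S v
    calc ∑ x ∈ S, ⟪x - fmean S, v⟫ ^ 2
        = (S.card : ℝ) * ((S.card : ℝ)⁻¹ * ∑ x ∈ S, ⟪x - fmean S, v⟫ ^ 2) := by
          field_simp
      _ ≤ (S.card : ℝ) * (fstdev S ^ 2 * ‖v‖ ^ 2) :=
          mul_le_mul_of_nonneg_left this (le_of_lt hc)

lemma subset_bound {d : ℕ} (A B : Finset (EuclideanSpace ℝ (Fin d))) (hAB : A ⊆ B)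
    (v : EuclideanSpace ℝ (Fin d)) :
    (∑ x ∈ A, ⟪x - fmean A, v⟫ ^ 2) + (A.card : ℝ) * ⟪fmean A - fmean B, v⟫ ^ 2 ≤
      (B.card : ℝ) * (fstdev B ^ 2 * ‖v‖ ^ 2) := by
  rw [← sum_sq_split A (fmean B) v]
  calc ∑ x ∈ A, ⟪x - fmean B, v⟫ ^ 2 ≤ ∑ x ∈ B, ⟪x - fmean B, v⟫ ^ 2 :=
        Finset.sum_le_sum_of_subset_of_nonneg hAB (fun x _ _ => by positivity)
    _ ≤ _ := sum_sq_le B v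

lemma stdev_subset_sq_le {d : ℕ} (A B : Finset (EuclideanSpace ℝ (Fin d))) (hAB : A ⊆ B)
    (ha : (0:ℝ) < (A.card : ℝ)) :
    fstdev A ^ 2 ≤ ((B.card : ℝ) / (A.card : ℝ)) * fstdev B ^ 2 := by
  apply fstdev_sq_le _ _ (by positivity)
  intro v
  have h := subset_bound A B hAB v
  have h2 : ∑ x ∈ A, ⟪x - fmean A, v⟫ ^ 2 ≤ (B.card : ℝ) * (fstdev B ^ 2 * ‖v‖ ^ 2) := by
    nlinarith [sq_nonneg (⟪fmean A - fmean B, v⟫ : ℝ), ha.le]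
  calc ((A.card:ℝ))⁻¹ * ∑ x ∈ A, ⟪x - fmean A, v⟫ ^ 2
      ≤ ((A.card:ℝ))⁻¹ * ((B.card : ℝ) * (fstdev B ^ 2 * ‖v‖ ^ 2)) :=
        mul_le_mul_of_nonneg_left h2 (by positivity)
    _ = (B.card : ℝ) / (A.card : ℝ) * fstdev B ^ 2 * ‖v‖ ^ 2 := by
        field_simp

lemma mean_drift {d : ℕ} (A B : Finset (EuclideanSpace ℝ (Fin d))) (hAB : A ⊆ B) :
    (A.card : ℝ) * ‖fmean A - fmean B‖ ^ 2 ≤ (B.card : ℝ) * fstdev B ^ 2 := by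
  set u := fmean A - fmean B with hu
  have h := subset_bound A B hAB u
  rw [← hu] at h
  have hiu : (⟪u, u⟫ : ℝ) = ‖u‖ ^ 2 := real_inner_self_eq_norm_sq u
  rw [hiu] at h
  have h1 : (A.card : ℝ) * (‖u‖ ^ 2) ^ 2 ≤ (B.card : ℝ) * (fstdev B ^ 2 * ‖u‖ ^ 2) := by
    nlinarith [Finset.sum_nonneg (fun x (_ : x ∈ A) => sq_nonneg (⟪x - fmean A, u⟫ : ℝ))]
  rcases eq_or_lt_of_le (sq_nonneg ‖u‖) with h0 | h0
  · rw [← h0, mul_zero]; positivity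
  · nlinarith

lemma two_subsets {d : ℕ} (A A' S : Finset (EuclideanSpace ℝ (Fin d)))
    (hA : A ⊆ S) (hA' : A' ⊆ S) (hdisj : Disjoint A A') :
    (A.card : ℝ) * (A'.card : ℝ) * ‖fmean A - fmean A'‖ ^ 2 ≤
      ((A.card : ℝ) + (A'.card : ℝ)) * (S.card : ℝ) * fstdev S ^ 2 := by
  set v := fmean A - fmean A' with hv
  set p : ℝ := ⟪fmean A - fmean S, v⟫ with hp
  set q : ℝ := ⟪fmean A' - fmean S, v⟫ with hq
  set a : ℝ := (A.card : ℝ)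
  set b : ℝ := (A'.card : ℝ)
  have ha0 : 0 ≤ a := by positivity
  have hb0 : 0 ≤ b := by positivity
  have hK : a * p ^ 2 + b * q ^ 2 ≤ (S.card : ℝ) * (fstdev S ^ 2 * ‖v‖ ^ 2) := by
    have e1 : ∑ x ∈ A, ⟪x - fmean S, v⟫ ^ 2 =
        (∑ x ∈ A, ⟪x - fmean A, v⟫ ^ 2) + a * p ^ 2 := sum_sq_split A (fmean S) v
    have e2 : ∑ x ∈ A', ⟪x - fmean S, v⟫ ^ 2 =
        (∑ x ∈ A', ⟪x - fmean A', v⟫ ^ 2) + b * q ^ 2 := sum_sq_split A' (fmean S) v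
    have e3 : (∑ x ∈ A, ⟪x - fmean S, v⟫ ^ 2) + (∑ x ∈ A', ⟪x - fmean S, v⟫ ^ 2) =
        ∑ x ∈ A ∪ A', ⟪x - fmean S, v⟫ ^ 2 := (Finset.sum_union hdisj).symm
    have e4 : ∑ x ∈ A ∪ A', ⟪x - fmean S, v⟫ ^ 2 ≤ ∑ x ∈ S, ⟪x - fmean S, v⟫ ^ 2 :=
      Finset.sum_le_sum_of_subset_of_nonneg (Finset.union_subset hA hA')
        (fun x _ _ => by positivity)
    have e5 := sum_sq_le S v
    have e6 : 0 ≤ ∑ x ∈ A, ⟪x - fmean A, v⟫ ^ 2 :=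
      Finset.sum_nonneg fun x _ => sq_nonneg _
    have e7 : 0 ≤ ∑ x ∈ A', ⟪x - fmean A', v⟫ ^ 2 :=
      Finset.sum_nonneg fun x _ => sq_nonneg _
    linarith
  have hpq : p - q = ‖v‖ ^ 2 := by
    rw [hp, hq, ← inner_sub_left, sub_sub_sub_cancel_right, ← hv,
      real_inner_self_eq_norm_sq]
  have key : a * b * (‖v‖ ^ 2) ^ 2 ≤ (a + b) * ((S.card : ℝ) * (fstdev S ^ 2 * ‖v‖ ^ 2)) := by
    have h1 : a * b * (p - q) ^ 2 ≤ (a + b) * (a * p ^ 2 + b * q ^ 2) := by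
      nlinarith [sq_nonneg (a * p + b * q)]
    calc a * b * (‖v‖ ^ 2) ^ 2 = a * b * (p - q) ^ 2 := by rw [hpq]
      _ ≤ (a + b) * (a * p ^ 2 + b * q ^ 2) := h1
      _ ≤ (a + b) * ((S.card : ℝ) * (fstdev S ^ 2 * ‖v‖ ^ 2)) :=
          mul_le_mul_of_nonneg_left hK (by positivity)
  rcases eq_or_lt_of_le (sq_nonneg ‖v‖) with h0 | h0
  · rw [← h0, mul_zero]; positivity
  · nlinarith [sq_nonneg (fstdev S), (by positivity : (0:ℝ) ≤ (S.card:ℝ))]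

lemma fmean_empty {d : ℕ} : fmean (∅ : Finset (EuclideanSpace ℝ (Fin d))) = 0 := by
  simp [fmean]

lemma fstdev_empty {d : ℕ} : fstdev (∅ : Finset (EuclideanSpace ℝ (Fin d))) = 0 := by
  have h : fcov (∅ : Finset (EuclideanSpace ℝ (Fin d))) = 0 := by simp [fcov]
  rw [fstdev, h]
  have h2 : opNorm (0 : Matrix (Fin d) (Fin d) ℝ) = 0 := by
    rw [opNorm]
    rw [map_zero, map_zero, norm_zero]
  rw [h2, Real.sqrt_zero]


set_option maxHeartbeats 10000000 in
/-- Under the no-large-sub-cluster condition, at most one output set per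
cluster. If the clusters `S_i` satisfy NLSC with parameter `α`, the sets `B_j` are disjoint,
large, each mostly contained in its cluster `S_{i(j)}`, and pairwise well separated, then the map
`j ↦ i(j)` is injective. -/
theorem nlsc_injective_assignment {d k m : ℕ} (T : Finset (EuclideanSpace ℝ (Fin d)))
    (α : ℝ) (hα0 : 0 < α) (hα1 : α ≤ 1)
    (S : Fin k → Finset (EuclideanSpace ℝ (Fin d)))
    (hSsub : ∀ i, S i ⊆ T)
    (hSdisj : ∀ i i' : Fin k, i ≠ i' → Disjoint (S i) (S i'))
    (hNLSC : ∀ i : Fin k, ∀ S' ⊆ S i, 0.8 * α * (T.card : ℝ) ≤ (S'.card : ℝ) →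
      0.1 * fstdev (S i) ≤ fstdev S')
    (B : Fin m → Finset (EuclideanSpace ℝ (Fin d)))
    (hBsub : ∀ j, B j ⊆ T)
    (hBdisj : ∀ j j' : Fin m, j ≠ j' → Disjoint (B j) (B j'))
    (hBsize : ∀ j, 0.92 * α * (T.card : ℝ) ≤ ((B j).card : ℝ))
    (g : Fin m → Fin k)
    (hoverlap : ∀ j, 0.96 * ((B j).card : ℝ) ≤ (((B j) ∩ S (g j)).card : ℝ))
    (hsep : ∀ j j' : Fin m, j ≠ j' →
      13 * (fstdev (B j) + fstdev (B j')) / Real.sqrt α < ‖fmean (B j) - fmean (B j')‖) :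
    Function.Injective g := by
  intro j j' hg
  by_contra hne
  have hsep' := hsep j j' hne
  rcases Nat.eq_zero_or_pos T.card with hT0 | hTpos
  · have hTe : T = ∅ := Finset.card_eq_zero.mp hT0
    have hBe : B j = ∅ := Finset.subset_empty.mp (hTe ▸ hBsub j)
    have hBe' : B j' = ∅ := Finset.subset_empty.mp (hTe ▸ hBsub j')
    rw [hBe, hBe', fmean_empty, fstdev_empty] at hsep'
    simp at hsep'
  -- main case
  set n : ℝ := (T.card : ℝ) with hn
  have hn0 : 0 < n := by rw [hn]; exact_mod_cast hTpos
  have hαn : 0 < α * n := mul_pos hα0 hn0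
  set A : Finset (EuclideanSpace ℝ (Fin d)) := B j ∩ S (g j) with hA
  set A' : Finset (EuclideanSpace ℝ (Fin d)) := B j' ∩ S (g j') with hA'
  set a : ℝ := (A.card : ℝ) with ha
  set b : ℝ := (A'.card : ℝ) with hb
  set Bc : ℝ := ((B j).card : ℝ) with hBc
  set Bc' : ℝ := ((B j').card : ℝ) with hBc'
  set σ : ℝ := fstdev (B j) with hσ
  set σ' : ℝ := fstdev (B j') with hσ'
  set s : ℝ := fstdev (S (g j)) with hs
  have hσ0 : 0 ≤ σ := fstdev_nonneg _
  have hσ'0 : 0 ≤ σ' := fstdev_nonneg _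
  have hs0 : 0 ≤ s := fstdev_nonneg _
  have hBcl : 0.92 * α * n ≤ Bc := hBsize j
  have hBcl' : 0.92 * α * n ≤ Bc' := hBsize j'
  have hBcpos : 0 < Bc := by linarith
  have hBcpos' : 0 < Bc' := by linarith
  have ha96 : 0.96 * Bc ≤ a := hoverlap j
  have hb96 : 0.96 * Bc' ≤ b := hoverlap j'
  have hapos : 0 < a := by linarith
  have hbpos : 0 < b := by linarith
  have halb : 0.8832 * α * n ≤ a := by linarith
  have hblb : 0.8832 * α * n ≤ b := by linarith
  -- subset relations
  have hAS : A ⊆ S (g j) := Finset.inter_subset_right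
  have hA'S : A' ⊆ S (g j) := by rw [hg]; exact Finset.inter_subset_right
  have hABj : A ⊆ B j := Finset.inter_subset_left
  have hA'Bj' : A' ⊆ B j' := Finset.inter_subset_left
  have hdisjAA' : Disjoint A A' :=
    Disjoint.mono hABj hA'Bj' (hBdisj j j' hne)
  -- card relations
  set Sc : ℝ := ((S (g j)).card : ℝ) with hSc
  have habSc : a + b ≤ Sc := by
    have h1 : (A ∪ A').card = A.card + A'.card := Finset.card_union_of_disjoint hdisjAA'
    have h2 : (A ∪ A').card ≤ (S (g j)).card :=
      Finset.card_le_card (Finset.union_subset hAS hA'S)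
    rw [ha, hb, hSc]
    exact_mod_cast h1 ▸ h2
  have hScn : Sc ≤ n := by
    rw [hSc, hn]; exact_mod_cast Finset.card_le_card (hSsub (g j))
  -- NLSC applications
  have hnlsc1 : 0.1 * s ≤ fstdev A := by
    apply hNLSC (g j) A Finset.inter_subset_right
    linarith
  have hnlsc2 : 0.1 * s ≤ fstdev A' := by
    have h := hNLSC (g j') A' Finset.inter_subset_right (by rw [← hb]; linarith)
    rw [← hg] at h
    exact h
  -- E1 : s^2 ≤ (100/0.96) σ^2 and σ'^2
  have hE1 : s ^ 2 ≤ (100 / 0.96) * σ ^ 2 := by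
    have hC1 := stdev_subset_sq_le A (B j) hABj hapos
    have h01 : (0.1 * s) ^ 2 ≤ fstdev A ^ 2 :=
      pow_le_pow_left₀ (by positivity) hnlsc1 2
    have hBa : Bc / a ≤ 1 / 0.96 := by
      rw [div_le_div_iff₀ hapos (by norm_num)]; linarith
    have h3 : (Bc / a) * σ ^ 2 ≤ (1 / 0.96) * σ ^ 2 :=
      mul_le_mul_of_nonneg_right hBa (sq_nonneg σ)
    have he : (0.1 * s) ^ 2 = 0.01 * s ^ 2 := by ring
    linarith
  have hE1' : s ^ 2 ≤ (100 / 0.96) * σ' ^ 2 := by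
    have hC1 := stdev_subset_sq_le A' (B j') hA'Bj' hbpos
    have h01 : (0.1 * s) ^ 2 ≤ fstdev A' ^ 2 :=
      pow_le_pow_left₀ (by positivity) hnlsc2 2
    have hBa : Bc' / b ≤ 1 / 0.96 := by
      rw [div_le_div_iff₀ hbpos (by norm_num)]; linarith
    have h3 : (Bc' / b) * σ' ^ 2 ≤ (1 / 0.96) * σ' ^ 2 :=
      mul_le_mul_of_nonneg_right hBa (sq_nonneg σ')
    have he : (0.1 * s) ^ 2 = 0.01 * s ^ 2 := by ring
    linarith
  -- E2 : mean drift bounds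
  have hE2 : ‖fmean A - fmean (B j)‖ ≤ 1.021 * σ := by
    have h := mean_drift A (B j) hABj
    have hm := mul_le_mul_of_nonneg_right ha96 (sq_nonneg ‖fmean A - fmean (B j)‖)
    have h' : Bc * (0.96 * ‖fmean A - fmean (B j)‖ ^ 2) ≤ Bc * σ ^ 2 := by
      have he : Bc * (0.96 * ‖fmean A - fmean (B j)‖ ^ 2) =
          0.96 * Bc * ‖fmean A - fmean (B j)‖ ^ 2 := by ring
      linarith
    have h'' := le_of_mul_le_mul_left h' hBcpos
    refine sq_le_sq_imp_le (by positivity) ?_ (norm_nonneg _)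
    have he2 : (1.021 * σ) ^ 2 = 1.042441 * σ ^ 2 := by ring
    have hq := sq_nonneg σ
    linarith
  have hE2' : ‖fmean A' - fmean (B j')‖ ≤ 1.021 * σ' := by
    have h := mean_drift A' (B j') hA'Bj'
    have hm := mul_le_mul_of_nonneg_right hb96 (sq_nonneg ‖fmean A' - fmean (B j')‖)
    have h' : Bc' * (0.96 * ‖fmean A' - fmean (B j')‖ ^ 2) ≤ Bc' * σ' ^ 2 := by
      have he : Bc' * (0.96 * ‖fmean A' - fmean (B j')‖ ^ 2) =
          0.96 * Bc' * ‖fmean A' - fmean (B j')‖ ^ 2 := by ring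
      linarith
    have h'' := le_of_mul_le_mul_left h' hBcpos'
    refine sq_le_sq_imp_le (by positivity) ?_ (norm_nonneg _)
    have he2 : (1.021 * σ') ^ 2 = 1.042441 * σ' ^ 2 := by ring
    have hq := sq_nonneg σ'
    linarith
  -- E3 : separation of the two sub-cluster means
  set Δ : ℝ := ‖fmean A - fmean A'‖ with hΔ
  have hΔ0 : 0 ≤ Δ := norm_nonneg _
  have hE3 : α * Δ ^ 2 ≤ (2 / 0.8832) * s ^ 2 := by
    have h := two_subsets A A' (S (g j)) hAS hA'S hdisjAA'
    rw [← ha, ← hb, ← hΔ, ← hSc, ← hs] at h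
    have h1 := mul_le_mul_of_nonneg_left hScn (show (0:ℝ) ≤ (a + b) * s ^ 2 by positivity)
    have t1 : (0.8832 * α * n) * a ≤ b * a := mul_le_mul_of_nonneg_right hblb hapos.le
    have t2 : (0.8832 * α * n) * b ≤ a * b := mul_le_mul_of_nonneg_right halb hbpos.le
    have claim : (a + b) * n * α ≤ (2 / 0.8832) * (a * b) := by linarith
    have h2 : ((a + b) * n * α) * s ^ 2 ≤ ((2 / 0.8832) * (a * b)) * s ^ 2 :=
      mul_le_mul_of_nonneg_right claim (sq_nonneg s)
    have hα' := mul_le_mul_of_nonneg_left h hα0.le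
    have hα1' := mul_le_mul_of_nonneg_left h1 hα0.le
    have h3 : (a * b) * (α * Δ ^ 2) ≤ (a * b) * ((2 / 0.8832) * s ^ 2) := by
      linarith [hα', hα1', h2]
    exact le_of_mul_le_mul_left h3 (mul_pos hapos hbpos)
  -- square root facts
  set r : ℝ := Real.sqrt α with hr
  have hr0 : 0 < r := Real.sqrt_pos.mpr hα0
  have hr2 : r ^ 2 = α := Real.sq_sqrt hα0.le
  have hr1 : r ≤ 1 := by
    rw [hr, show (1:ℝ) = Real.sqrt 1 by rw [Real.sqrt_one]]
    exact Real.sqrt_le_sqrt hα1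
  set X : ℝ := σ + σ' with hX
  have hX0 : 0 ≤ X := by positivity
  -- E3' : Δ ≤ 10.9 X / r
  -- triangle inequality
  have htri : ‖fmean (B j) - fmean (B j')‖ ≤
      ‖fmean A - fmean (B j)‖ + Δ + ‖fmean A' - fmean (B j')‖ := by
    have h := dist_triangle4 (fmean (B j)) (fmean A) (fmean A') (fmean (B j'))
    rw [dist_eq_norm, dist_eq_norm, dist_eq_norm, dist_eq_norm] at h
    rw [norm_sub_rev (fmean (B j)) (fmean A)] at h
    exact h
  clear_value n a b Bc Bc' σ σ' s Sc Δ r X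
  have hE3' : Δ ≤ 10.9 * X / r := by
    apply sq_le_sq_imp_le (by positivity) _ hΔ0
    have hy : (10.9 * X / r) ^ 2 = 118.81 * X ^ 2 / α := by
      rw [div_pow, mul_pow, hr2]; norm_num
    rw [hy, le_div_iff₀ hα0]
    have hs2 : 2 * s ^ 2 ≤ (100 / 0.96) * (σ ^ 2 + σ' ^ 2) := by linarith
    have hX2 : σ ^ 2 + σ' ^ 2 ≤ X ^ 2 := by
      have hXe : X ^ 2 = σ ^ 2 + 2 * (σ * σ') + σ' ^ 2 := by rw [hX]; ring
      have := mul_nonneg hσ0 hσ'0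
      linarith
    have hgoal : Δ ^ 2 * α = α * Δ ^ 2 := by ring
    rw [hgoal]
    linarith [hE3, hs2, hX2, sq_nonneg X]
  have hD : ‖fmean (B j) - fmean (B j')‖ ≤ 1.021 * X + 10.9 * X / r := by
    have hXe : 1.021 * σ + 1.021 * σ' = 1.021 * X := by rw [hX]; ring
    linarith [htri, hE2, hE2', hE3']
  -- contradiction
  have h13 : 13 * X < ‖fmean (B j) - fmean (B j')‖ * r := by
    rw [← div_lt_iff₀ hr0]
    exact hsep'
  have hDr : ‖fmean (B j) - fmean (B j')‖ * r ≤ 1.021 * X * r + 10.9 * X := by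
    calc ‖fmean (B j) - fmean (B j')‖ * r ≤ (1.021 * X + 10.9 * X / r) * r :=
          mul_le_mul_of_nonneg_right hD hr0.le
      _ = 1.021 * X * r + 10.9 * X / r * r := by ring
      _ = 1.021 * X * r + 10.9 * X := by rw [div_mul_cancel₀ _ hr0.ne']
  have hXr : X * r ≤ X := mul_le_of_le_one_right hX0 hr1
  linarith [h13, hDr, hXr]
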